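/- arXiv:1603.03379 — 2 statements merged into one kernel-verified Lean document; each statement's English description precedes it below -/
import Mathlib

section
/- Norm relation for the Klein–Gordon complex velocity: writing φ = exp(R/ℏ + iS/ℏ) with real R, S, and V^μ := (1/m₀)[iℏ∂^μ ln φ + eA^μ], one has V*_μ V^μ = (1/m₀²) Re{φ*(iℏD_μ)(iℏD^μ)φ}/(φ*φ) + (ℏ²/2m₀²) ∂_μ∂^μ(φφ*)/(φ*φ), where iℏD_μ := iℏ∂_μ + eA_μ. -/
open Complex

/-- Partial derivative `∂_μ f` of a complex-valued function on `ℝ⁴`. -/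
noncomputable def pdC (i : Fin 4) (f : (Fin 4 → ℝ) → ℂ) (x : Fin 4 → ℝ) : ℂ :=
  fderiv ℝ f x (Pi.single i 1)

/-- Partial derivative `∂_μ f` of a real-valued function on `ℝ⁴`. -/
noncomputable def pdR (i : Fin 4) (f : (Fin 4 → ℝ) → ℝ) (x : Fin 4 → ℝ) : ℝ :=
  fderiv ℝ f x (Pi.single i 1)

/-- Metric signs of `g = diag(+1,−1,−1,−1)`. -/
def mink (i : Fin 4) : ℝ := if i = 0 then 1 else -1

/-- The d'Alembertian `∂_μ∂^μ f` of a real-valued function. -/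
noncomputable def dAlembert (f : (Fin 4 → ℝ) → ℝ) (x : Fin 4 → ℝ) : ℝ :=
  ∑ μ : Fin 4, mink μ * pdR μ (pdR μ f) x

/-- `φ = exp(R/ℏ + iS/ℏ)`. -/
noncomputable def phiOf (hbar : ℝ) (R S : (Fin 4 → ℝ) → ℝ) (x : Fin 4 → ℝ) : ℂ :=
  Complex.exp ((R x + Complex.I * S x) / hbar)

/-- Complex velocity `V^μ = (1/m₀)[iℏ ∂^μ ln φ + e A^μ]` for `φ = exp(R/ℏ + iS/ℏ)`. -/
noncomputable def Vel (m0 hbar e : ℝ) (R S : (Fin 4 → ℝ) → ℝ)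
    (A : Fin 4 → (Fin 4 → ℝ) → ℝ) (μ : Fin 4) (x : Fin 4 → ℝ) : ℂ :=
  (1 / m0) * (Complex.I * hbar *
      ((mink μ : ℂ) * pdC μ (fun y => ((R y : ℂ) + Complex.I * S y) / hbar) x)
    + e * A μ x)

/-- `iℏD_ν ψ = (iℏ∂_ν + eA_ν)ψ`, with `A_ν = g_{νρ}A^ρ`. -/
noncomputable def opLow (hbar e : ℝ) (A : Fin 4 → (Fin 4 → ℝ) → ℝ) (ν : Fin 4)
    (ψ : (Fin 4 → ℝ) → ℂ) (x : Fin 4 → ℝ) : ℂ :=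
  Complex.I * hbar * pdC ν ψ x + e * ((mink ν * A ν x : ℝ) : ℂ) * ψ x

/-- `(iℏD_μ)(iℏD^μ)ψ`. -/
noncomputable def KGop (hbar e : ℝ) (A : Fin 4 → (Fin 4 → ℝ) → ℝ)
    (ψ : (Fin 4 → ℝ) → ℂ) (x : Fin 4 → ℝ) : ℂ :=
  ∑ ν : Fin 4, (mink ν : ℂ) * opLow hbar e A ν (fun y => opLow hbar e A ν ψ y) x

private lemma pdC_eq {f : (Fin 4 → ℝ) → ℂ} {L : (Fin 4 → ℝ) →L[ℝ] ℂ} {x : Fin 4 → ℝ}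
    (h : HasFDerivAt f L x) (i : Fin 4) : pdC i f x = L (Pi.single i 1) := by
  rw [pdC, h.fderiv]

private lemma pdR_eq {f : (Fin 4 → ℝ) → ℝ} {L : (Fin 4 → ℝ) →L[ℝ] ℝ} {x : Fin 4 → ℝ}
    (h : HasFDerivAt f L x) (i : Fin 4) : pdR i f x = L (Pi.single i 1) := by
  rw [pdR, h.fderiv]

private lemma hasFDerivAt_ofReal' {f : (Fin 4 → ℝ) → ℝ} {L : (Fin 4 → ℝ) →L[ℝ] ℝ}
    {x : Fin 4 → ℝ} (h : HasFDerivAt f L x) :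
    HasFDerivAt (fun y => (f y : ℂ)) (Complex.ofRealCLM.comp L) x :=
  Complex.ofRealCLM.hasFDerivAt.comp x h

private lemma diff_pd {f : (Fin 4 → ℝ) → ℝ} (hf : ContDiff ℝ 2 f) (i : Fin 4) :
    Differentiable ℝ (fun y => pdR i f y) := by
  have h1 : ContDiff ℝ 1 (fderiv ℝ f) := hf.fderiv_right (by norm_num)
  have h2 : Differentiable ℝ (fderiv ℝ f) := h1.differentiable one_ne_zero
  exact (ContinuousLinearMap.apply ℝ ℝ ((Pi.single i 1 : Fin 4 → ℝ))).differentiable.comp h2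

private lemma pd2_eq (f : (Fin 4 → ℝ) → ℝ) (i j : Fin 4) (x : Fin 4 → ℝ) :
    fderiv ℝ (fun y => pdR i f y) x (Pi.single j 1) = pdR j (pdR i f) x := rfl

private lemma fd_eq (f : (Fin 4 → ℝ) → ℝ) (i : Fin 4) (x : Fin 4 → ℝ) :
    fderiv ℝ f x (Pi.single i 1) = pdR i f x := rfl

set_option maxHeartbeats 2000000 in
/-- Norm relation for the Klein–Gordon complex velocity:
`V*_μ V^μ = (1/m₀²) Re{φ*(iℏD_μ)(iℏD^μ)φ}/(φ*φ) + (ℏ²/2m₀²) ∂_μ∂^μ(φφ*)/(φ*φ)`. -/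
theorem stmt_15 (m0 hbar e : ℝ) (hm0 : 0 < m0) (hhbar : 0 < hbar) (he : 0 < e)
    (R S : (Fin 4 → ℝ) → ℝ) (hR : ContDiff ℝ 2 R) (hS : ContDiff ℝ 2 S)
    (A : Fin 4 → (Fin 4 → ℝ) → ℝ) (hA : ∀ μ, ContDiff ℝ 2 (A μ)) :
    ∀ x : Fin 4 → ℝ,
      (∑ μ : Fin 4, (mink μ : ℂ) *
          (starRingEnd ℂ) (Vel m0 hbar e R S A μ x) * Vel m0 hbar e R S A μ x)
      = (((1 / m0 ^ 2) *
            ((starRingEnd ℂ) (phiOf hbar R S x) * KGop hbar e A (phiOf hbar R S) x).re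
            / Complex.normSq (phiOf hbar R S x) : ℝ) : ℂ)
        + (((hbar ^ 2 / (2 * m0 ^ 2)) *
            dAlembert (fun y => Complex.normSq (phiOf hbar R S y)) x
            / Complex.normSq (phiOf hbar R S x) : ℝ) : ℂ) := by
  intro x
  have hbne : hbar ≠ 0 := ne_of_gt hhbar
  have hbC : (hbar : ℂ) ≠ 0 := by exact_mod_cast hbne
  have hmne : m0 ≠ 0 := ne_of_gt hm0
  have hN : Real.exp (2 * R x / hbar) ≠ 0 := (Real.exp_pos _).ne'
  have hRd : Differentiable ℝ R := hR.differentiable two_ne_zero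
  have hSd : Differentiable ℝ S := hS.differentiable two_ne_zero
  have hAd : ∀ ν, Differentiable ℝ (A ν) := fun ν => (hA ν).differentiable two_ne_zero
  -- derivative of the exponent
  have hG : ∀ y : Fin 4 → ℝ, HasFDerivAt (fun z => ((R z : ℂ) + Complex.I * S z) / hbar)
      (((hbar:ℂ)⁻¹) • (Complex.ofRealCLM.comp (fderiv ℝ R y)
        + Complex.I • (Complex.ofRealCLM.comp (fderiv ℝ S y)))) y := by
    intro y
    have h1 := hasFDerivAt_ofReal' (hRd y).hasFDerivAt
    have h2 := (hasFDerivAt_ofReal' (hSd y).hasFDerivAt).const_mul Complex.I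
    have h3 := (h1.add h2).mul_const ((hbar:ℂ)⁻¹)
    simpa only [div_eq_mul_inv, Pi.add_apply] using h3
  have F1 : ∀ (ν : Fin 4) (y : Fin 4 → ℝ),
      pdC ν (fun z => ((R z : ℂ) + Complex.I * S z) / hbar) y
        = ((pdR ν R y : ℂ) + Complex.I * pdR ν S y) / hbar := by
    intro ν y
    rw [pdC_eq (hG y) ν]
    simp only [ContinuousLinearMap.smul_apply, ContinuousLinearMap.add_apply,
      ContinuousLinearMap.coe_comp', Function.comp_apply, Complex.ofRealCLM_apply,
      smul_eq_mul, pdR]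
    field_simp
  have hPhiH : ∀ y : Fin 4 → ℝ, HasFDerivAt (phiOf hbar R S)
      (phiOf hbar R S y • (((hbar:ℂ)⁻¹) • (Complex.ofRealCLM.comp (fderiv ℝ R y)
        + Complex.I • (Complex.ofRealCLM.comp (fderiv ℝ S y))))) y := fun y => (hG y).cexp
  have F2 : ∀ (ν : Fin 4) (y : Fin 4 → ℝ),
      pdC ν (phiOf hbar R S) y
        = phiOf hbar R S y * (((pdR ν R y : ℂ) + Complex.I * pdR ν S y) / hbar) := by
    intro ν y
    rw [pdC_eq (hPhiH y) ν]
    simp only [ContinuousLinearMap.smul_apply, ContinuousLinearMap.add_apply,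
      ContinuousLinearMap.coe_comp', Function.comp_apply, Complex.ofRealCLM_apply,
      smul_eq_mul, pdR]
    field_simp
  -- first application of opLow
  have F3 : ∀ (ν : Fin 4) (y : Fin 4 → ℝ),
      opLow hbar e A ν (phiOf hbar R S) y
        = phiOf hbar R S y * (Complex.I * ((pdR ν R y : ℂ) + Complex.I * pdR ν S y)
            + e * ((mink ν * A ν y : ℝ) : ℂ)) := by
    intro ν y
    rw [opLow, F2 ν y]
    field_simp
  -- derivative of the first-order factor, and second application of opLow
  have F4 : ∀ ν : Fin 4,
      pdC ν (fun y => opLow hbar e A ν (phiOf hbar R S) y) x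
        = phiOf hbar R S x * (((pdR ν R x : ℂ) + Complex.I * pdR ν S x) / hbar)
            * (Complex.I * ((pdR ν R x : ℂ) + Complex.I * pdR ν S x)
                + e * ((mink ν * A ν x : ℝ) : ℂ))
          + phiOf hbar R S x
            * (Complex.I * ((pdR ν (pdR ν R) x : ℂ) + Complex.I * pdR ν (pdR ν S) x)
                + e * ((mink ν * pdR ν (A ν) x : ℝ) : ℂ)) := by
    intro ν
    have hfx : (fun y => opLow hbar e A ν (phiOf hbar R S) y)
        = fun y => phiOf hbar R S y * (Complex.I * ((pdR ν R y : ℂ) + Complex.I * pdR ν S y)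
            + e * ((mink ν * A ν y : ℝ) : ℂ)) := funext fun y => F3 ν y
    rw [hfx]
    have hr2 := ((diff_pd hR ν) x).hasFDerivAt
    have hs2 := ((diff_pd hS ν) x).hasFDerivAt
    have hAν := ((hAd ν x).hasFDerivAt.const_mul (mink ν))
    have hC : HasFDerivAt (fun y => Complex.I * ((pdR ν R y : ℂ) + Complex.I * pdR ν S y)
        + (e:ℂ) * ((mink ν * A ν y : ℝ) : ℂ))
        ((Complex.I • ((Complex.ofRealCLM.comp (fderiv ℝ (fun y => pdR ν R y) x))
            + Complex.I • (Complex.ofRealCLM.comp (fderiv ℝ (fun y => pdR ν S y) x))))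
          + (e:ℂ) • (Complex.ofRealCLM.comp ((mink ν) • fderiv ℝ (A ν) x))) x := by
      exact (((hasFDerivAt_ofReal' hr2).add
        ((hasFDerivAt_ofReal' hs2).const_mul Complex.I)).const_mul Complex.I).add
        ((hasFDerivAt_ofReal' hAν).const_mul (e:ℂ))
    erw [pdC_eq ((hPhiH x).mul hC) ν]
    simp only [ContinuousLinearMap.add_apply, ContinuousLinearMap.smul_apply,
      ContinuousLinearMap.coe_comp', Function.comp_apply, Complex.ofRealCLM_apply,
      smul_eq_mul, pd2_eq, fd_eq, Complex.ofReal_mul]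
    field_simp
    ring
  have F5 : ∀ ν : Fin 4,
      opLow hbar e A ν (fun y => opLow hbar e A ν (phiOf hbar R S) y) x
        = phiOf hbar R S x *
            (Complex.I * hbar * ((((pdR ν R x : ℂ) + Complex.I * pdR ν S x) / hbar)
                * (Complex.I * ((pdR ν R x : ℂ) + Complex.I * pdR ν S x)
                    + e * ((mink ν * A ν x : ℝ) : ℂ))
              + (Complex.I * ((pdR ν (pdR ν R) x : ℂ) + Complex.I * pdR ν (pdR ν S) x)
                  + e * ((mink ν * pdR ν (A ν) x : ℝ) : ℂ)))
            + e * ((mink ν * A ν x : ℝ) : ℂ)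
                * (Complex.I * ((pdR ν R x : ℂ) + Complex.I * pdR ν S x)
                    + e * ((mink ν * A ν x : ℝ) : ℂ))) := by
    intro ν
    rw [opLow, F4 ν, F3 ν x]
    ring
  -- the modulus
  have F7 : ∀ y : Fin 4 → ℝ,
      Complex.normSq (phiOf hbar R S y) = Real.exp (2 * R y / hbar) := by
    intro y
    have hz : ((R y : ℂ) + Complex.I * S y) / hbar
        = ((R y / hbar : ℝ) : ℂ) + ((S y / hbar : ℝ) : ℂ) * Complex.I := by
      push_cast
      field_simp
    rw [phiOf, hz, Complex.normSq_eq_norm_sq, Complex.norm_exp]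
    simp only [Complex.add_re, Complex.ofReal_re, Complex.mul_re, Complex.I_re,
      Complex.I_im, Complex.ofReal_im, mul_zero, mul_one, zero_sub, sub_zero]
    rw [sq, ← Real.exp_add]
    ring_nf
  have F8 : ∀ (μ : Fin 4) (y : Fin 4 → ℝ),
      pdR μ (fun z => Real.exp (2 * R z / hbar)) y
        = Real.exp (2 * R y / hbar) * (2 * pdR μ R y / hbar) := by
    intro μ y
    have h1 : HasFDerivAt (fun z => 2 * R z / hbar)
        ((hbar⁻¹ : ℝ) • ((2:ℝ) • fderiv ℝ R y)) y := by
      have := ((hRd y).hasFDerivAt.const_mul (2:ℝ)).mul_const (hbar⁻¹ : ℝ)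
      simpa only [div_eq_mul_inv] using this
    rw [pdR_eq h1.exp μ]
    simp only [ContinuousLinearMap.smul_apply, smul_eq_mul, fd_eq]
    field_simp
  have hD2 : ∀ μ : Fin 4,
      pdR μ (pdR μ (fun z => Real.exp (2 * R z / hbar))) x
        = Real.exp (2 * R x / hbar) * (2 * pdR μ R x / hbar) * (2 * pdR μ R x / hbar)
          + Real.exp (2 * R x / hbar) * (2 * pdR μ (pdR μ R) x / hbar) := by
    intro μ
    have hfx : pdR μ (fun z => Real.exp (2 * R z / hbar))
        = fun y => Real.exp (2 * R y / hbar) * (2 * pdR μ R y / hbar) :=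
      funext fun y => F8 μ y
    rw [hfx]
    have h1 : HasFDerivAt (fun z => 2 * R z / hbar)
        ((hbar⁻¹ : ℝ) • ((2:ℝ) • fderiv ℝ R x)) x := by
      have := ((hRd x).hasFDerivAt.const_mul (2:ℝ)).mul_const (hbar⁻¹ : ℝ)
      simpa only [div_eq_mul_inv] using this
    have h2 : HasFDerivAt (fun y => 2 * pdR μ R y / hbar)
        ((hbar⁻¹ : ℝ) • ((2:ℝ) • fderiv ℝ (fun y => pdR μ R y) x)) x := by
      have := (((diff_pd hR μ) x).hasFDerivAt.const_mul (2:ℝ)).mul_const (hbar⁻¹ : ℝ)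
      simpa only [div_eq_mul_inv] using this
    erw [pdR_eq (h1.exp.mul h2) μ]
    simp only [ContinuousLinearMap.add_apply, ContinuousLinearMap.smul_apply,
      smul_eq_mul, pd2_eq, fd_eq]
    field_simp
    ring
  have hDal : dAlembert (fun y => Complex.normSq (phiOf hbar R S y)) x
      = ∑ μ : Fin 4, mink μ *
          (Real.exp (2 * R x / hbar) * (2 * pdR μ R x / hbar) * (2 * pdR μ R x / hbar)
            + Real.exp (2 * R x / hbar) * (2 * pdR μ (pdR μ R) x / hbar)) := by
    rw [dAlembert]
    refine Finset.sum_congr rfl fun μ _ => ?_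
    have hfx : (fun y => Complex.normSq (phiOf hbar R S y))
        = fun z => Real.exp (2 * R z / hbar) := funext fun y => F7 y
    rw [hfx, hD2 μ]
  -- the real part of φ* (KG φ)
  have hre : ((starRingEnd ℂ) (phiOf hbar R S x) * KGop hbar e A (phiOf hbar R S) x).re
      = Real.exp (2 * R x / hbar) * ∑ ν : Fin 4, mink ν *
          ((e * (mink ν * A ν x) - pdR ν S x) ^ 2 - (pdR ν R x) ^ 2
            - hbar * pdR ν (pdR ν R) x) := by
    rw [KGop, Finset.mul_sum, Complex.re_sum, Finset.mul_sum]
    refine Finset.sum_congr rfl fun ν _ => ?_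
    rw [F5 ν]
    have hswap : ∀ z : ℂ, (starRingEnd ℂ) (phiOf hbar R S x)
        * ((mink ν : ℂ) * (phiOf hbar R S x * z))
        = (mink ν : ℂ) * (((Complex.normSq (phiOf hbar R S x) : ℝ) : ℂ) * z) := by
      intro z
      rw [← Complex.mul_conj]
      ring
    rw [hswap, F7 x]
    simp only [Complex.mul_re, Complex.mul_im, Complex.add_re, Complex.add_im,
      Complex.sub_re, Complex.sub_im, Complex.I_re, Complex.I_im, Complex.ofReal_re,
      Complex.ofReal_im, Complex.div_ofReal_re, Complex.div_ofReal_im]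
    field_simp
    ring
  -- the left-hand side, term by term
  have hLHS : ∀ μ : Fin 4, (mink μ : ℂ) *
        (starRingEnd ℂ) (Vel m0 hbar e R S A μ x) * Vel m0 hbar e R S A μ x
      = ((mink μ * ((1 / m0 ^ 2) *
          ((e * A μ x - mink μ * pdR μ S x) ^ 2 + (pdR μ R x) ^ 2)) : ℝ) : ℂ) := by
    intro μ
    clear hre hDal hD2 F8 F7 F5 F4 F3 F2 hPhiH hG
    rw [Vel, F1 μ x]
    have hg : mink μ = 1 ∨ mink μ = -1 := by rw [mink]; split <;> simp
    generalize pdR μ R x = r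
    generalize pdR μ S x = s
    generalize A μ x = a
    rcases hg with h | h <;> rw [h] <;>
      apply Complex.ext <;>
        simp only [map_mul, map_add, map_div₀, map_one, Complex.conj_I, Complex.conj_ofReal,
          Complex.mul_re, Complex.mul_im, Complex.add_re, Complex.add_im,
          Complex.div_ofReal_re, Complex.div_ofReal_im, Complex.I_re, Complex.I_im,
          Complex.ofReal_re, Complex.ofReal_im, Complex.one_re, Complex.one_im,
          Complex.neg_re, Complex.neg_im] <;>
        field_simp <;> ring
  -- assemble
  simp only [hLHS]
  rw [← Complex.ofReal_sum, hre, hDal, F7 x, ← Complex.ofReal_add, Complex.ofReal_inj]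
  simp only [Finset.mul_sum, Finset.sum_div, ← Finset.sum_add_distrib]
  refine Finset.sum_congr rfl fun μ _ => ?_
  have hg : mink μ = 1 ∨ mink μ = -1 := by rw [mink]; split <;> simp
  rcases hg with h | h <;> rw [h] <;> field_simp <;> ring
end

section
/- If φ solves the Klein–Gordon equation (iℏD_α)(iℏD^α)φ = m₀²c²φ, then Re{φ*(iℏD_μ)(iℏD^μ)φ}/(φ*φ) = c²m₀², and hence V*_μV^μ − c² = (ℏ²/2m₀²)∂_μ∂^μ(φφ*)/(φ*φ). -/
open Complex

section myhelpers

lemma diffAt_ofReal {f : (Fin 4 → ℝ) → ℝ} {x} (hf : DifferentiableAt ℝ f x) :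
    DifferentiableAt ℝ (fun y => (f y : ℂ)) x :=
  Complex.ofRealCLM.differentiableAt.comp x hf

lemma diffAt_mix {u v : (Fin 4 → ℝ) → ℝ} {x} (hu : DifferentiableAt ℝ u x)
    (hv : DifferentiableAt ℝ v x) :
    DifferentiableAt ℝ (fun y => (u y : ℂ) + Complex.I * v y) x :=
  (diffAt_ofReal hu).add ((diffAt_ofReal hv).const_mul Complex.I)

lemma pdC_mix {u v : (Fin 4 → ℝ) → ℝ} {x} (i : Fin 4) (hu : DifferentiableAt ℝ u x)
    (hv : DifferentiableAt ℝ v x) :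
    pdC i (fun y => (u y : ℂ) + Complex.I * v y) x
      = (pdR i u x : ℂ) + Complex.I * pdR i v x := by
  have h1 : HasFDerivAt (fun y => ((u y : ℝ) : ℂ)) (Complex.ofRealCLM.comp (fderiv ℝ u x)) x :=
    Complex.ofRealCLM.hasFDerivAt.comp x hu.hasFDerivAt
  have h2 : HasFDerivAt (fun y => ((v y : ℝ) : ℂ)) (Complex.ofRealCLM.comp (fderiv ℝ v x)) x :=
    Complex.ofRealCLM.hasFDerivAt.comp x hv.hasFDerivAt
  have h := h1.add (h2.const_mul Complex.I)
  rw [pdC, show (fun y => (u y : ℂ) + Complex.I * v y) = ((fun y => ((u y : ℝ) : ℂ)) + fun y => Complex.I * ((v y : ℝ) : ℂ)) from rfl, h.fderiv]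
  simp [pdR]

lemma pdC_mul {u v : (Fin 4 → ℝ) → ℂ} {x} (i : Fin 4) (hu : DifferentiableAt ℝ u x)
    (hv : DifferentiableAt ℝ v x) :
    pdC i (fun y => u y * v y) x = pdC i u x * v x + u x * pdC i v x := by
  simp only [pdC, fderiv_fun_mul hu hv, ContinuousLinearMap.add_apply,
    ContinuousLinearMap.smul_apply, smul_eq_mul]
  ring

lemma pdC_cexp {g : (Fin 4 → ℝ) → ℂ} {x} (i : Fin 4) (hg : DifferentiableAt ℝ g x) :
    pdC i (fun y => Complex.exp (g y)) x = Complex.exp (g x) * pdC i g x := by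
  simp [pdC, hg.hasFDerivAt.cexp.fderiv]

lemma pdR_exp {f : (Fin 4 → ℝ) → ℝ} {x} (i : Fin 4) (hf : DifferentiableAt ℝ f x) :
    pdR i (fun y => Real.exp (f y)) x = Real.exp (f x) * pdR i f x := by
  simp [pdR, fderiv_exp hf]

lemma pdR_mul {u v : (Fin 4 → ℝ) → ℝ} {x} (i : Fin 4) (hu : DifferentiableAt ℝ u x)
    (hv : DifferentiableAt ℝ v x) :
    pdR i (fun y => u y * v y) x = pdR i u x * v x + u x * pdR i v x := by
  simp only [pdR, fderiv_fun_mul hu hv, ContinuousLinearMap.add_apply,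
    ContinuousLinearMap.smul_apply, smul_eq_mul]
  ring

lemma pdR_const_mul {f : (Fin 4 → ℝ) → ℝ} {x} (i : Fin 4) (k : ℝ)
    (hf : DifferentiableAt ℝ f x) :
    pdR i (fun y => k * f y) x = k * pdR i f x := by
  simp [pdR, fderiv_const_mul hf k]

lemma pdR_div_const {f : (Fin 4 → ℝ) → ℝ} {x} (i : Fin 4) (k : ℝ)
    (hf : DifferentiableAt ℝ f x) :
    pdR i (fun y => f y / k) x = pdR i f x / k := by
  simp only [div_eq_mul_inv, pdR, fderiv_mul_const hf, ContinuousLinearMap.smul_apply,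
    smul_eq_mul]
  ring

lemma pdR_sub {u v : (Fin 4 → ℝ) → ℝ} {x} (i : Fin 4) (hu : DifferentiableAt ℝ u x)
    (hv : DifferentiableAt ℝ v x) :
    pdR i (fun y => u y - v y) x = pdR i u x - pdR i v x := by
  simp [pdR, fderiv_fun_sub hu hv]

lemma contDiff_pdR {f : (Fin 4 → ℝ) → ℝ} (hf : ContDiff ℝ 2 f) (i : Fin 4) :
    ContDiff ℝ 1 (pdR i f) := by
  have := (ContinuousLinearMap.apply ℝ ℝ (Pi.single i 1)).contDiff.comp
    (hf.fderiv_right (m := 1) (by norm_num))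
  exact this

end myhelpers

/-- If `φ` solves the Klein–Gordon equation `(iℏD_α)(iℏD^α)φ = m₀²c²φ`, then
`Re{φ*(iℏD_μ)(iℏD^μ)φ}/(φ*φ) = c²m₀²`, and hence
`V*_μV^μ − c² = (ℏ²/2m₀²)∂_μ∂^μ(φφ*)/(φ*φ)`. -/
theorem stmt_16 (m0 hbar e c : ℝ) (hm0 : 0 < m0) (hhbar : 0 < hbar) (he : 0 < e)
    (hc : 0 < c)
    (R S : (Fin 4 → ℝ) → ℝ) (hR : ContDiff ℝ 2 R) (hS : ContDiff ℝ 2 S)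
    (A : Fin 4 → (Fin 4 → ℝ) → ℝ) (hA : ∀ μ, ContDiff ℝ 2 (A μ))
    (hKG : ∀ x, KGop hbar e A (phiOf hbar R S) x
      = (m0 ^ 2 * c ^ 2 : ℝ) * phiOf hbar R S x) :
    ∀ x : Fin 4 → ℝ,
      (((starRingEnd ℂ) (phiOf hbar R S x) * KGop hbar e A (phiOf hbar R S) x).re
          / Complex.normSq (phiOf hbar R S x) = c ^ 2 * m0 ^ 2) ∧
      ((∑ μ : Fin 4, (mink μ : ℂ) *
          (starRingEnd ℂ) (Vel m0 hbar e R S A μ x) * Vel m0 hbar e R S A μ x)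
          - (c ^ 2 : ℂ)
        = (((hbar ^ 2 / (2 * m0 ^ 2)) *
            dAlembert (fun y => Complex.normSq (phiOf hbar R S y)) x
            / Complex.normSq (phiOf hbar R S x) : ℝ) : ℂ)) := by
  have hhbar' : hbar ≠ 0 := ne_of_gt hhbar
  have hm0' : m0 ≠ 0 := ne_of_gt hm0
  have hhbarC : (hbar : ℂ) ≠ 0 := by exact_mod_cast hhbar'
  have hm0C : (m0 : ℂ) ≠ 0 := by exact_mod_cast hm0'
  have hRd : Differentiable ℝ R := hR.differentiable (by norm_num)
  have hSd : Differentiable ℝ S := hS.differentiable (by norm_num)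
  have hAd : ∀ μ, Differentiable ℝ (A μ) := fun μ => (hA μ).differentiable (by norm_num)
  have hdR1 : ∀ ν, Differentiable ℝ (pdR ν R) :=
    fun ν => (contDiff_pdR hR ν).differentiable one_ne_zero
  have hdS1 : ∀ ν, Differentiable ℝ (pdR ν S) :=
    fun ν => (contDiff_pdR hS ν).differentiable one_ne_zero
  have hu0 : Differentiable ℝ (fun y => R y / hbar) := by
    simp only [div_eq_mul_inv]; exact fun y => (hRd y).mul_const _
  have hv0 : Differentiable ℝ (fun y => S y / hbar) := by
    simp only [div_eq_mul_inv]; exact fun y => (hSd y).mul_const _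
  have hphiF : phiOf hbar R S
      = fun y => Complex.exp (((R y / hbar : ℝ) : ℂ) + Complex.I * ((S y / hbar : ℝ) : ℂ)) := by
    funext y
    simp only [phiOf]
    congr 1
    push_cast
    ring
  have hphid : Differentiable ℝ (phiOf hbar R S) := by
    rw [hphiF]; exact fun y => ((diffAt_mix (hu0 y) (hv0 y)).cexp)
  have hphine : ∀ y, phiOf hbar R S y ≠ 0 := by
    rw [hphiF]; exact fun y => Complex.exp_ne_zero _
  -- first derivative of φ
  have hdphi : ∀ (i : Fin 4) y, pdC i (phiOf hbar R S) y
      = phiOf hbar R S y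
        * (((pdR i R y / hbar : ℝ) : ℂ) + Complex.I * ((pdR i S y / hbar : ℝ) : ℂ)) := by
    intro i y
    conv_lhs => rw [hphiF]
    rw [pdC_cexp i (diffAt_mix (hu0 y) (hv0 y)), pdC_mix i (hu0 y) (hv0 y),
      pdR_div_const i hbar (hRd y), pdR_div_const i hbar (hSd y), hphiF]
  -- differentiability of the real part of c_ν
  have hufd : ∀ ν : Fin 4, Differentiable ℝ (fun y => e * (mink ν * A ν y) - pdR ν S y) :=
    fun ν => (((hAd ν).const_mul (mink ν)).const_mul e).sub (hdS1 ν)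
  -- first application of the operator
  have hopφ : ∀ (ν : Fin 4) y, opLow hbar e A ν (phiOf hbar R S) y
      = phiOf hbar R S y
        * (((e * (mink ν * A ν y) - pdR ν S y : ℝ) : ℂ)
            + Complex.I * ((pdR ν R y : ℝ) : ℂ)) := by
    intro ν y
    simp only [opLow]
    rw [hdphi ν y]
    push_cast
    field_simp
    linear_combination (phiOf hbar R S y * (pdR ν S y : ℂ)) * Complex.I_sq
  -- differentiability of c_ν mix
  have hcfd : ∀ (ν : Fin 4) y, DifferentiableAt ℝ
      (fun z => ((e * (mink ν * A ν z) - pdR ν S z : ℝ) : ℂ)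
          + Complex.I * ((pdR ν R z : ℝ) : ℂ)) y :=
    fun ν y => diffAt_mix ((hufd ν) y) ((hdR1 ν) y)
  intro x
  -- second application of the operator
  have hop2 : ∀ ν : Fin 4, opLow hbar e A ν (fun y => opLow hbar e A ν (phiOf hbar R S) y) x
      = phiOf hbar R S x *
        ((((e * (mink ν * A ν x) - pdR ν S x : ℝ) : ℂ)
              + Complex.I * ((pdR ν R x : ℝ) : ℂ)) ^ 2
          + Complex.I * hbar *
            (((pdR ν (fun y => e * (mink ν * A ν y) - pdR ν S y) x : ℝ) : ℂ)
              + Complex.I * ((pdR ν (pdR ν R) x : ℝ) : ℂ))) := by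
    intro ν
    have hfun : (fun y => opLow hbar e A ν (phiOf hbar R S) y)
        = fun y => phiOf hbar R S y *
            (((e * (mink ν * A ν y) - pdR ν S y : ℝ) : ℂ)
              + Complex.I * ((pdR ν R y : ℝ) : ℂ)) :=
      funext (hopφ ν)
    rw [hfun]
    simp only [opLow]
    rw [pdC_mul ν (hphid x) (hcfd ν x), hdphi ν x,
      pdC_mix ν ((hufd ν) x) ((hdR1 ν) x)]
    push_cast
    field_simp
    linear_combination (phiOf hbar R S x * (pdR ν S x : ℂ)
      * ((e : ℂ) * (mink ν : ℂ) * (A ν x : ℂ) - ((pdR ν S x : ℝ) : ℂ)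
          + Complex.I * ((pdR ν R x : ℝ) : ℂ))) * Complex.I_sq
  have hKGval : KGop hbar e A (phiOf hbar R S) x
      = phiOf hbar R S x * ∑ ν : Fin 4, (mink ν : ℂ) *
          ((((e * (mink ν * A ν x) - pdR ν S x : ℝ) : ℂ)
                + Complex.I * ((pdR ν R x : ℝ) : ℂ)) ^ 2
            + Complex.I * hbar *
              (((pdR ν (fun y => e * (mink ν * A ν y) - pdR ν S y) x : ℝ) : ℂ)
                + Complex.I * ((pdR ν (pdR ν R) x : ℝ) : ℂ))) := by
    simp only [KGop]
    rw [Finset.mul_sum]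
    refine Finset.sum_congr rfl fun ν _ => ?_
    rw [hop2 ν]; ring
  have Hc : ∑ ν : Fin 4, (mink ν : ℂ) *
          ((((e * (mink ν * A ν x) - pdR ν S x : ℝ) : ℂ)
                + Complex.I * ((pdR ν R x : ℝ) : ℂ)) ^ 2
            + Complex.I * hbar *
              (((pdR ν (fun y => e * (mink ν * A ν y) - pdR ν S y) x : ℝ) : ℂ)
                + Complex.I * ((pdR ν (pdR ν R) x : ℝ) : ℂ)))
      = ((m0 ^ 2 * c ^ 2 : ℝ) : ℂ) := by
    have h := hKG x
    rw [hKGval] at h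
    exact mul_left_cancel₀ (hphine x) (h.trans (mul_comm _ _))
  -- real part of the Klein-Gordon identity
  have H : ∑ ν : Fin 4, mink ν *
      ((e * (mink ν * A ν x) - pdR ν S x) ^ 2 - (pdR ν R x) ^ 2
        - hbar * pdR ν (pdR ν R) x) = m0 ^ 2 * c ^ 2 := by
    have h := congrArg Complex.re Hc
    simp only [Fin.sum_univ_four, pow_two, Complex.add_re, Complex.add_im, Complex.mul_re,
      Complex.mul_im, Complex.I_re, Complex.I_im, Complex.ofReal_re, Complex.ofReal_im] at h
    simp only [Fin.sum_univ_four, pow_two]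
    linear_combination h
  -- the squared modulus of φ
  have hNf : (fun y => Complex.normSq (phiOf hbar R S y))
      = fun y => Real.exp (2 * (R y / hbar)) := by
    funext y
    simp only [hphiF]
    rw [Complex.normSq_eq_norm_sq, Complex.norm_exp]
    rw [show (2:ℝ) * (R y / hbar) = R y / hbar + R y / hbar by ring, Real.exp_add, pow_two]
    congr 1 <;>
      simp [Complex.add_re, Complex.mul_re, Complex.I_re, Complex.I_im,
        Complex.ofReal_re, Complex.ofReal_im]
  have hgd2 : Differentiable ℝ (fun z => 2 * (R z / hbar)) := by
    simp only [div_eq_mul_inv]; exact fun z => ((hRd z).mul_const _).const_mul 2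
  have hNd1 : ∀ (μ : Fin 4) y, pdR μ (fun z => Real.exp (2 * (R z / hbar))) y
      = Real.exp (2 * (R y / hbar)) * (2 * (pdR μ R y / hbar)) := by
    intro μ y
    rw [pdR_exp μ (hgd2 y)]
    congr 1
    rw [pdR_const_mul μ 2 (hu0 y), pdR_div_const μ hbar (hRd y)]
  have hdal : dAlembert (fun y => Complex.normSq (phiOf hbar R S y)) x
      = ∑ μ : Fin 4, mink μ *
          (Real.exp (2 * (R x / hbar)) * (2 * (pdR μ R x / hbar)) * (2 * (pdR μ R x / hbar))
            + Real.exp (2 * (R x / hbar)) * (2 * (pdR μ (pdR μ R) x / hbar))) := by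
    simp only [dAlembert, hNf]
    refine Finset.sum_congr rfl fun μ _ => ?_
    congr 1
    have hfun2 : pdR μ (fun z => Real.exp (2 * (R z / hbar)))
        = fun y => Real.exp (2 * (R y / hbar)) * (2 * (pdR μ R y / hbar)) :=
      funext (hNd1 μ)
    have hd2 : Differentiable ℝ (fun y => 2 * (pdR μ R y / hbar)) := by
      simp only [div_eq_mul_inv]; exact fun z => ((hdR1 μ z).mul_const _).const_mul 2
    rw [hfun2, pdR_mul μ (hgd2 x).exp (hd2 x), hNd1 μ x,
      pdR_const_mul μ 2 (f := fun y => pdR μ R y / hbar) (by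
        simpa [div_eq_mul_inv] using ((hdR1 μ x).mul_const hbar⁻¹)),
      pdR_div_const μ hbar (hdR1 μ x)]
  -- velocity components
  have hgdv : ∀ μ : Fin 4, pdC μ (fun y => ((R y : ℂ) + Complex.I * S y) / hbar) x
      = ((pdR μ R x / hbar : ℝ) : ℂ) + Complex.I * ((pdR μ S x / hbar : ℝ) : ℂ) := by
    intro μ
    have hfn : (fun y => ((R y : ℂ) + Complex.I * S y) / hbar)
        = fun y => ((R y / hbar : ℝ) : ℂ) + Complex.I * ((S y / hbar : ℝ) : ℂ) := by
      funext y; push_cast; ring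
    rw [hfn, pdC_mix μ (hu0 x) (hv0 x), pdR_div_const μ hbar (hRd x),
      pdR_div_const μ hbar (hSd x)]
  have hvel : ∀ μ : Fin 4, Vel m0 hbar e R S A μ x
      = (((e * A μ x - mink μ * pdR μ S x) / m0 : ℝ) : ℂ)
        + (((mink μ * pdR μ R x) / m0 : ℝ) : ℂ) * Complex.I := by
    intro μ
    simp only [Vel]
    rw [hgdv μ]
    push_cast
    field_simp [hhbarC, hm0C]
    linear_combination ((mink μ : ℂ) * (pdR μ S x : ℂ)) * Complex.I_sq
  have hterm : ∀ μ : Fin 4, (mink μ : ℂ) *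
        (starRingEnd ℂ) (Vel m0 hbar e R S A μ x) * Vel m0 hbar e R S A μ x
      = ((mink μ * (((e * A μ x - mink μ * pdR μ S x) / m0) ^ 2
          + ((mink μ * pdR μ R x) / m0) ^ 2) : ℝ) : ℂ) := by
    intro μ
    rw [mul_assoc, hvel μ, mul_comm ((starRingEnd ℂ) _), Complex.mul_conj,
      Complex.normSq_add_mul_I]
    push_cast
    ring
  refine ⟨?_, ?_⟩
  · -- part 1
    rw [hKG x]
    have hcc : (starRingEnd ℂ) (phiOf hbar R S x) * (((m0 ^ 2 * c ^ 2 : ℝ) : ℂ) * phiOf hbar R S x)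
        = ((m0 ^ 2 * c ^ 2 * Complex.normSq (phiOf hbar R S x) : ℝ) : ℂ) := by
      rw [mul_comm ((starRingEnd ℂ) _), mul_assoc, Complex.mul_conj]
      push_cast
      ring
    rw [hcc, Complex.ofReal_re]
    have hn0 : Complex.normSq (phiOf hbar R S x) ≠ 0 :=
      (Complex.normSq_pos.mpr (hphine x)).ne'
    field_simp
  · -- part 2
    rw [Finset.sum_congr rfl (fun μ _ => hterm μ), ← Complex.ofReal_sum]
    rw [show ((c : ℂ) ^ 2) = ((c ^ 2 : ℝ) : ℂ) by push_cast; ring, ← Complex.ofReal_sub,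
      Complex.ofReal_inj]
    rw [hdal, show Complex.normSq (phiOf hbar R S x) = Real.exp (2 * (R x / hbar)) from
      congrFun hNf x]
    set E := Real.exp (2 * (R x / hbar)) with hE
    have hE0 : E ≠ 0 := (Real.exp_pos _).ne'
    simp only [Fin.sum_univ_four] at H ⊢
    have hm : mink 0 = 1 ∧ mink 1 = -1 ∧ mink 2 = -1 ∧ mink 3 = -1 := by
      refine ⟨rfl, rfl, rfl, rfl⟩
    rw [hm.1, hm.2.1, hm.2.2.1, hm.2.2.2] at H ⊢
    field_simp
    linear_combination H
end
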